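/- The function f(θ) = θ / cosh(θ/4) on (0,∞) attains a maximum, and hence there exists a critical value λ* > 0 such that the equation θ = √(2λ) cosh(θ/4) has at least two solutions θ for 0 < λ < λ*, exactly one solution at λ = λ*, and no solution for λ > λ*. -/

import Mathlib

open Real Set

noncomputable def Ff (θ : ℝ) : ℝ := θ / Real.cosh (θ / 4)
noncomputable def Gg (θ : ℝ) : ℝ := Real.cosh (θ / 4) - θ / 4 * Real.sinh (θ / 4)

lemma hasDerivAt_Gg (θ : ℝ) : HasDerivAt Gg (-(θ / 16) * Real.cosh (θ / 4)) θ := by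
  have h1 : HasDerivAt (fun x : ℝ => x / 4) (1/4) θ := (hasDerivAt_id θ).div_const 4
  have hc : HasDerivAt (fun x : ℝ => Real.cosh (x/4)) (Real.sinh (θ/4) * (1/4)) θ :=
    by have := (Real.hasDerivAt_cosh (θ/4)).comp θ h1; exact this
  have hs : HasDerivAt (fun x : ℝ => Real.sinh (x/4)) (Real.cosh (θ/4) * (1/4)) θ :=
    by have := (Real.hasDerivAt_sinh (θ/4)).comp θ h1; exact this
  have h2 : HasDerivAt (fun x : ℝ => x / 4 * Real.sinh (x/4))
      (1/4 * Real.sinh (θ/4) + θ/4 * (Real.cosh (θ/4) * (1/4))) θ := h1.mul hs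
  have := hc.sub h2
  refine this.congr_deriv ?_
  ring

lemma hasDerivAt_Ff (θ : ℝ) :
    HasDerivAt Ff (Gg θ / (Real.cosh (θ/4))^2) θ := by
  have h1 : HasDerivAt (fun x : ℝ => x / 4) (1/4) θ := (hasDerivAt_id θ).div_const 4
  have hc : HasDerivAt (fun x : ℝ => Real.cosh (x/4)) (Real.sinh (θ/4) * (1/4)) θ :=
    by have := (Real.hasDerivAt_cosh (θ/4)).comp θ h1; exact this
  have hne : Real.cosh (θ/4) ≠ 0 := (Real.cosh_pos _).ne'
  have := (hasDerivAt_id θ).div hc hne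
  refine this.congr_deriv ?_
  unfold Gg
  simp only [id_eq]
  ring

lemma Gg_cont : Continuous Gg := by unfold Gg; fun_prop
lemma Ff_cont : Continuous Ff := by
  unfold Ff
  exact continuous_id.div (by fun_prop) (fun x => (Real.cosh_pos _).ne')

lemma Gg_strictAnti : StrictAntiOn Gg (Ici 0) := by
  apply strictAntiOn_of_deriv_neg (convex_Ici 0) Gg_cont.continuousOn
  intro x hx
  rw [interior_Ici] at hx
  have hx' : 0 < x := hx
  rw [(hasDerivAt_Gg x).deriv]
  have := Real.cosh_pos (x/4)
  nlinarith

lemma Gg_zero : Gg 0 = 1 := by simp [Gg]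

lemma Gg_eight : Gg 8 < 0 := by
  unfold Gg
  norm_num
  rw [Real.cosh_eq, Real.sinh_eq]
  have h1 := Real.add_one_le_exp (2:ℝ)
  have h2 : Real.exp (-2) < 1 := Real.exp_lt_one_iff.mpr (by norm_num)
  have h3 := Real.exp_pos (-2:ℝ)
  nlinarith

lemma exists_tmax : ∃ t : ℝ, 0 < t ∧ Gg t = 0 := by
  have h : (0:ℝ) ∈ Icc (Gg 8) (Gg 0) := ⟨Gg_eight.le, by rw [Gg_zero]; norm_num⟩
  obtain ⟨t, ht, hGt⟩ := intermediate_value_Icc' (by norm_num : (0:ℝ) ≤ 8)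
    Gg_cont.continuousOn h
  refine ⟨t, ?_, hGt⟩
  rcases lt_or_eq_of_le ht.1 with h' | h'
  · exact h'
  · exfalso; rw [← h'] at hGt; rw [Gg_zero] at hGt; norm_num at hGt

theorem bratu_fold_structure :
    ∃ θmax : ℝ, 0 < θmax ∧
      (∀ θ : ℝ, 0 < θ → θ / Real.cosh (θ / 4) ≤ θmax / Real.cosh (θmax / 4)) ∧
      ∃ lamStar : ℝ, 0 < lamStar ∧
        lamStar = (θmax / Real.cosh (θmax / 4)) ^ 2 / 2 ∧
        (∀ lam : ℝ, 0 < lam → lam < lamStar →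
          ∃ θ₁ θ₂ : ℝ, 0 < θ₁ ∧ 0 < θ₂ ∧ θ₁ ≠ θ₂ ∧
            θ₁ = Real.sqrt (2 * lam) * Real.cosh (θ₁ / 4) ∧
            θ₂ = Real.sqrt (2 * lam) * Real.cosh (θ₂ / 4)) ∧
        (∃! θ : ℝ, 0 < θ ∧ θ = Real.sqrt (2 * lamStar) * Real.cosh (θ / 4)) ∧
        (∀ lam : ℝ, lamStar < lam →
          ¬∃ θ : ℝ, 0 < θ ∧ θ = Real.sqrt (2 * lam) * Real.cosh (θ / 4)) := by
  obtain ⟨t, ht, hGt⟩ := exists_tmax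
  -- Ff is strictly monotone on [0,t] and strictly antitone on [t,∞)
  have hMono : StrictMonoOn Ff (Icc 0 t) := by
    apply strictMonoOn_of_deriv_pos (convex_Icc 0 t) Ff_cont.continuousOn
    intro x hx
    rw [interior_Icc] at hx
    rw [(hasDerivAt_Ff x).deriv]
    have hG : 0 < Gg x := by
      have := Gg_strictAnti (mem_Ici.mpr hx.1.le) (mem_Ici.mpr ht.le) hx.2
      linarith [hGt ▸ this]
    exact div_pos hG (by positivity)
  have hAnti : StrictAntiOn Ff (Ici t) := by
    apply strictAntiOn_of_deriv_neg (convex_Ici t) Ff_cont.continuousOn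
    intro x hx
    rw [interior_Ici] at hx
    rw [(hasDerivAt_Ff x).deriv]
    have hG : Gg x < 0 := by
      have := Gg_strictAnti (mem_Ici.mpr ht.le) (mem_Ici.mpr (ht.le.trans hx.le)) hx
      linarith [hGt ▸ this]
    exact div_neg_of_neg_of_pos hG (by positivity)
  -- strict maximality
  have hmaxs : ∀ θ : ℝ, 0 < θ → θ ≠ t → Ff θ < Ff t := by
    intro θ hθ hne
    rcases lt_or_gt_of_ne hne with h | h
    · exact hMono ⟨hθ.le, h.le⟩ ⟨ht.le, le_rfl⟩ h
    · exact hAnti (mem_Ici.mpr le_rfl) (mem_Ici.mpr h.le) h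
  have hmax : ∀ θ : ℝ, 0 < θ → Ff θ ≤ Ff t := by
    intro θ hθ
    rcases eq_or_ne θ t with rfl | hne
    · exact le_rfl
    · exact (hmaxs θ hθ hne).le
  set M : ℝ := Ff t with hMdef
  have hM : 0 < M := div_pos ht (Real.cosh_pos _)
  -- equation equivalence
  have heq : ∀ θ c : ℝ, (θ = c * Real.cosh (θ/4)) ↔ Ff θ = c := by
    intro θ c
    have h := (Real.cosh_pos (θ/4)).ne'
    unfold Ff
    rw [div_eq_iff h]
  -- tail bound : Ff θ ≤ 128 / θ for θ > 0
  have htail : ∀ θ : ℝ, 0 < θ → Ff θ ≤ 128 / θ := by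
    intro θ hθ
    have h1 : Real.exp (θ/8) ≥ 1 + θ/8 := by linarith [Real.add_one_le_exp (θ/8)]
    have h2 : Real.exp (θ/4) ≥ (1 + θ/8)^2 := by
      have : Real.exp (θ/4) = Real.exp (θ/8) * Real.exp (θ/8) := by
        rw [← Real.exp_add]; ring_nf
      nlinarith [Real.exp_pos (θ/8)]
    have h3 : Real.cosh (θ/4) ≥ θ^2/128 := by
      rw [Real.cosh_eq]
      nlinarith [Real.exp_pos (-(θ/4))]
    have h4 : (0:ℝ) < θ^2/128 := by positivity
    unfold Ff
    calc θ / Real.cosh (θ/4) ≤ θ / (θ^2/128) :=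
          div_le_div_of_nonneg_left hθ.le h4 h3 |>.trans_eq rfl
      _ = 128 / θ := by field_simp
  refine ⟨t, ht, fun θ hθ => hmax θ hθ, M^2/2, by positivity, rfl, ?_, ?_, ?_⟩
  · -- two solutions for 0 < lam < lamStar
    intro lam hlam hlt
    set c : ℝ := Real.sqrt (2 * lam) with hc
    have hc0 : 0 < c := Real.sqrt_pos.mpr (by linarith)
    have hcM : c < M := by
      have : c < Real.sqrt (M^2) := by
        apply Real.sqrt_lt_sqrt (by linarith)
        nlinarith
      rwa [Real.sqrt_sq hM.le] at this
    -- θ₁ on [0, t]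
    have hFf0 : Ff 0 = 0 := by simp [Ff]
    have h01 : c ∈ Icc (Ff 0) (Ff t) := ⟨by rw [hFf0]; exact hc0.le, hcM.le⟩
    obtain ⟨θ₁, hθ₁m, hθ₁⟩ := intermediate_value_Icc ht.le Ff_cont.continuousOn h01
    have hθ₁pos : 0 < θ₁ := by
      rcases lt_or_eq_of_le hθ₁m.1 with h' | h'
      · exact h'
      · exfalso; rw [← h', hFf0] at hθ₁; linarith
    -- θ₂ on [t, T]
    set T : ℝ := max (t+1) (256/c) with hT
    have hTt : t ≤ T := le_trans (by linarith) (le_max_left _ _)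
    have hT0 : 0 < T := lt_of_lt_of_le ht hTt
    have hFT : Ff T < c := by
      have h1 : 256 / c ≤ T := le_max_right _ _
      have h2 : Ff T ≤ 128 / T := htail T hT0
      have h3 : 128 / T ≤ 128 / (256 / c) := by
        apply div_le_div_of_nonneg_left (by norm_num) (by positivity) h1
      have h4 : (128:ℝ) / (256 / c) = c/2 := by field_simp; ring
      linarith
    have h02 : c ∈ Icc (Ff T) (Ff t) := ⟨hFT.le, hcM.le⟩
    obtain ⟨θ₂, hθ₂m, hθ₂⟩ := intermediate_value_Icc' hTt Ff_cont.continuousOn h02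
    have hθ₂t : t < θ₂ := by
      rcases lt_or_eq_of_le hθ₂m.1 with h' | h'
      · exact h'
      · exfalso; rw [← h', ← hMdef] at hθ₂; linarith
    refine ⟨θ₁, θ₂, hθ₁pos, lt_trans ht hθ₂t, ?_, (heq θ₁ c).mpr hθ₁ , (heq θ₂ c).mpr hθ₂⟩
    exact ne_of_lt (lt_of_le_of_lt hθ₁m.2 hθ₂t)
  · -- unique solution at lamStar
    have hsqrt : Real.sqrt (2 * (M^2/2)) = M := by
      rw [show 2 * (M^2/2) = M^2 by ring, Real.sqrt_sq hM.le]
    refine ⟨t, ⟨ht, ?_⟩, ?_⟩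
    · rw [hsqrt]; exact (heq t M).mpr rfl
    · rintro θ ⟨hθpos, hθeq⟩
      rw [hsqrt] at hθeq
      have : Ff θ = M := (heq θ M).mp hθeq
      by_contra hne
      exact absurd this (ne_of_lt (hmaxs θ hθpos hne))
  · -- no solution for lam > lamStar
    intro lam hlt
    rintro ⟨θ, hθpos, hθeq⟩
    have hMlt : M < Real.sqrt (2 * lam) := by
      have : Real.sqrt (M^2) < Real.sqrt (2 * lam) := by
        apply Real.sqrt_lt_sqrt (by positivity)
        nlinarith
      rwa [Real.sqrt_sq hM.le] at this
    have : Ff θ = Real.sqrt (2 * lam) := (heq θ _).mp hθeq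
    have h := hmax θ hθpos
    rw [this] at h
    linarith
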